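/- arXiv:hep-th/0602274 — 3 statements merged into one kernel-verified Lean document; each statement's English description precedes it below -/
import Mathlib

section
/- Let β and m be real numbers and z a real variable. Define ζ(z) = z³ − 3·4^{−1/3}·m·z and Q(z) = β·(4^{1/3}·z⁵ − 5·m·z³ + 5·4^{−1/3}·m²·z). Then for every real z the pair (ζ(z), Q(z)) satisfies the algebraic equation Q³ − (3/4)·β²·m⁵·Q = β³·(4ζ⁵ − 5·m³·ζ³ + (5/4)·m⁶·ζ). -/
/-- For real `β`, `m`, and every real `z`, the pair
`ζ(z) = z³ − 3·4^{−1/3}·m·z`, `Q(z) = β(4^{1/3} z⁵ − 5 m z³ + 5·4^{−1/3} m² z)` satisfies the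
`(3,5)` conformal-background algebraic curve
`Q³ − (3/4)β² m⁵ Q = β³ (4ζ⁵ − 5 m³ ζ³ + (5/4) m⁶ ζ)`. -/
theorem curve_three_five_uniformization (β m z : ℝ) :
    let ζ : ℝ := z ^ 3 - 3 * (4 : ℝ) ^ (-(1 : ℝ) / 3) * m * z
    let Q : ℝ := β * ((4 : ℝ) ^ ((1 : ℝ) / 3) * z ^ 5 - 5 * m * z ^ 3
      + 5 * (4 : ℝ) ^ (-(1 : ℝ) / 3) * m ^ 2 * z)
    Q ^ 3 - (3 / 4) * β ^ 2 * m ^ 5 * Q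
      = β ^ 3 * (4 * ζ ^ 5 - 5 * m ^ 3 * ζ ^ 3 + (5 / 4) * m ^ 6 * ζ) := by
  intro ζ Q
  set a : ℝ := (4 : ℝ) ^ ((1 : ℝ) / 3) with ha_def
  have ha : a ^ 3 = 4 := by
    rw [ha_def, ← Real.rpow_natCast ((4:ℝ) ^ ((1:ℝ)/3)) 3, ← Real.rpow_mul (by norm_num)]
    norm_num
  have hinv : a * (4 : ℝ) ^ (-(1 : ℝ) / 3) = 1 := by
    rw [ha_def, ← Real.rpow_add (by norm_num)]
    norm_num
  have hb : (4 : ℝ) ^ (-(1 : ℝ) / 3) = a ^ 2 / 4 := by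
    have h4 : 4 * (4 : ℝ) ^ (-(1 : ℝ) / 3) = a ^ 2 := by
      calc 4 * (4 : ℝ) ^ (-(1 : ℝ) / 3) = a ^ 3 * (4 : ℝ) ^ (-(1 : ℝ) / 3) := by rw [ha]
        _ = a ^ 2 * (a * (4 : ℝ) ^ (-(1 : ℝ) / 3)) := by ring
        _ = a ^ 2 := by rw [hinv]; ring
    linarith
  have hζ : ζ = z ^ 3 - 3 * (4 : ℝ) ^ (-(1 : ℝ) / 3) * m * z := rfl
  have hQ : Q = β * (a * z ^ 5 - 5 * m * z ^ 3
      + 5 * (4 : ℝ) ^ (-(1 : ℝ) / 3) * m ^ 2 * z) := rfl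
  rw [hζ, hQ, hb]
  linear_combination (β ^ 3 * (z ^ 15 + 30 * m ^ 3 * z ^ 9 - (5/8) * m ^ 6 * z ^ 3
    - (75/4) * a * m ^ 2 * z ^ 11 + (3/16) * a * m ^ 5 * z ^ 5
    - (165/8) * a ^ 2 * m ^ 4 * z ^ 7 + (135/8) * a ^ 3 * m ^ 3 * z ^ 9
    - (5/32) * a ^ 3 * m ^ 6 * z ^ 3 + (243/64) * a ^ 4 * m ^ 5 * z ^ 5
    - (405/64) * a ^ 5 * m ^ 4 * z ^ 7 + (243/256) * a ^ 7 * m ^ 5 * z ^ 5)) * ha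
end

section
/- Let p, q be positive integers, μ > 0 and β ≠ 0 real numbers. For real ζ ≥ √μ define the conformal-background disk amplitude Q_0(ζ) = (β/2)·[ (ζ + √(ζ²−μ))^{q/p} + (ζ − √(ζ²−μ))^{q/p} ], where the exponent q/p is a real power (both bases are nonnegative for ζ ≥ √μ). Then for every ζ ≥ √μ, T_p( Q_0(ζ) / (β·μ^{q/(2p)}) ) = T_q( ζ / √μ ), where T_n denotes the Chebyshev polynomial of the first kind. -/
open Real Polynomial

lemma T_real_cosh (θ : ℝ) (n : ℤ) :
    (Polynomial.Chebyshev.T ℝ n).eval (Real.cosh θ) = Real.cosh (n * θ) := by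
  have h : (((Polynomial.Chebyshev.T ℝ n).eval (Real.cosh θ) : ℝ) : ℂ)
      = (Polynomial.Chebyshev.T ℂ n).eval ((Real.cosh θ : ℝ) : ℂ) :=
    Polynomial.Chebyshev.complex_ofReal_eval_T _ n
  have key : (((Polynomial.Chebyshev.T ℝ n).eval (Real.cosh θ) : ℝ) : ℂ)
      = ((Real.cosh (n * θ) : ℝ) : ℂ) := by
    rw [h, Complex.ofReal_cosh, ← Complex.cos_mul_I,
      Polynomial.Chebyshev.T_complex_cos, Complex.ofReal_cosh, ← Complex.cos_mul_I]
    push_cast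
    ring_nf
  exact_mod_cast key

/-- For positive integers `p, q`, reals `μ > 0`, `β ≠ 0`, and `ζ ≥ √μ`, the
conformal-background disk amplitude
`Q_0(ζ) = (β/2)[(ζ + √(ζ²−μ))^{q/p} + (ζ − √(ζ²−μ))^{q/p}]` satisfies
`T_p(Q_0(ζ)/(β μ^{q/2p})) = T_q(ζ/√μ)`, where `T_n` is the Chebyshev polynomial of the first
kind. -/
theorem disk_amplitude_chebyshev_curve (p q : ℕ) (hp : 0 < p) (hq : 0 < q)
    (μ β : ℝ) (hμ : 0 < μ) (hβ : β ≠ 0) (ζ : ℝ) (hζ : Real.sqrt μ ≤ ζ) :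
    let Q0 : ℝ := (β / 2) * ((ζ + Real.sqrt (ζ ^ 2 - μ)) ^ ((q : ℝ) / p)
      + (ζ - Real.sqrt (ζ ^ 2 - μ)) ^ ((q : ℝ) / p))
    (Polynomial.Chebyshev.T ℝ (p : ℤ)).eval (Q0 / (β * μ ^ ((q : ℝ) / (2 * p))))
      = (Polynomial.Chebyshev.T ℝ (q : ℤ)).eval (ζ / Real.sqrt μ) := by
  intro Q0
  have hsμ : 0 < Real.sqrt μ := Real.sqrt_pos.mpr hμ
  have hζ0 : 0 < ζ := lt_of_lt_of_le hsμ hζ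
  have hμζ : μ ≤ ζ ^ 2 := by
    have := mul_self_le_mul_self hsμ.le hζ
    rwa [Real.mul_self_sqrt hμ.le, ← pow_two] at this
  set s := Real.sqrt (ζ ^ 2 - μ) with hs
  have hs0 : 0 ≤ s := Real.sqrt_nonneg _
  have hssq : s ^ 2 = ζ ^ 2 - μ := Real.sq_sqrt (by linarith)
  have hab : (ζ + s) * (ζ - s) = μ := by ring_nf; nlinarith [hssq]
  have ha : 0 < ζ + s := by linarith
  have hb : 0 < ζ - s := by
    rcases lt_or_ge 0 (ζ - s) with h | h
    · exact h
    · exfalso; nlinarith [hab]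
  set θ := Real.log ((ζ + s) / Real.sqrt μ) with hθ
  have haθ : ζ + s = Real.sqrt μ * Real.exp θ := by
    rw [hθ, Real.exp_log (div_pos ha hsμ)]
    field_simp
  have hbθ : ζ - s = Real.sqrt μ * Real.exp (-θ) := by
    have h1 : ζ - s = μ / (ζ + s) := by
      field_simp
      nlinarith [hab]
    rw [h1, haθ, Real.exp_neg]
    field_simp
    linear_combination -Real.sq_sqrt hμ.le
  set r : ℝ := (q : ℝ) / p with hr
  have hμpow : Real.sqrt μ ^ r = μ ^ ((q : ℝ) / (2 * p)) := by
    rw [Real.sqrt_eq_rpow, ← Real.rpow_mul hμ.le]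
    congr 1
    rw [hr]
    ring
  have hapow : (ζ + s) ^ r = μ ^ ((q : ℝ) / (2 * p)) * Real.exp (r * θ) := by
    rw [haθ, Real.mul_rpow hsμ.le (Real.exp_pos θ).le, hμpow, ← Real.exp_mul]
    ring_nf
  have hbpow : (ζ - s) ^ r = μ ^ ((q : ℝ) / (2 * p)) * Real.exp (-(r * θ)) := by
    rw [hbθ, Real.mul_rpow hsμ.le (Real.exp_pos _).le, hμpow, ← Real.exp_mul]
    ring_nf
  have hμr0 : (0:ℝ) < μ ^ ((q : ℝ) / (2 * p)) := Real.rpow_pos_of_pos hμ _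
  have hQ : Q0 / (β * μ ^ ((q : ℝ) / (2 * p))) = Real.cosh (r * θ) := by
    show (β / 2) * ((ζ + s) ^ r + (ζ - s) ^ r) / (β * μ ^ ((q : ℝ) / (2 * p)))
        = Real.cosh (r * θ)
    rw [hapow, hbpow, Real.cosh_eq]
    field_simp
  have hRHS : ζ / Real.sqrt μ = Real.cosh θ := by
    have h2 : 2 * ζ = (ζ + s) + (ζ - s) := by ring
    rw [Real.cosh_eq]
    rw [haθ, hbθ] at h2
    field_simp
    linear_combination h2
  rw [hQ, hRHS, T_real_cosh, T_real_cosh]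
  congr 1
  have hp0 : (p : ℝ) ≠ 0 := Nat.cast_ne_zero.mpr hp.ne'
  rw [hr]
  field_simp
  push_cast
  ring
end

section
/- Let p, q be positive integers with q ≠ p, let a, b, n be integers, set m = b − a and τ_* = (−(a+b)/p + n/q)·π. Define G(τ) = [cos((q+p)τ_a) − cos((q+p)τ_b)]/(q+p) − [cos((q−p)τ_a) − cos((q−p)τ_b)]/(q−p), where τ_c = τ + 2πc/p. Then the second derivative of G at τ_* equals G″(τ_*) = 4q·sin((q−p)nπ/q)·sin((q−p)mπ/p). -/
open Real

private lemma hd_cos (k A : ℝ) (t : ℝ) :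
    HasDerivAt (fun t : ℝ => Real.cos (k * (t + A))) (-Real.sin (k * (t + A)) * k) t := by
  have h : HasDerivAt (fun t : ℝ => k * (t + A)) k t := by
    simpa using ((hasDerivAt_id t).add_const A).const_mul k
  simpa using h.cos

private lemma hd_sin (k A : ℝ) (t : ℝ) :
    HasDerivAt (fun t : ℝ => Real.sin (k * (t + A))) (Real.cos (k * (t + A)) * k) t := by
  have h : HasDerivAt (fun t : ℝ => k * (t + A)) k t := by
    simpa using ((hasDerivAt_id t).add_const A).const_mul k
  simpa using h.sin

/-- For positive integers `p ≠ q` and integers `a, b, n`, let `m = b − a` and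
`τ_* = (−(a+b)/p + n/q)π`.  The function
`G(τ) = [cos((q+p)τ_a) − cos((q+p)τ_b)]/(q+p) − [cos((q−p)τ_a) − cos((q−p)τ_b)]/(q−p)`,
with `τ_c = τ + 2πc/p`, satisfies `G″(τ_*) = 4q sin((q−p)nπ/q) sin((q−p)mπ/p)`. -/
theorem instanton_action_second_deriv (p q : ℕ) (hp : 0 < p) (hq : 0 < q) (hpq : q ≠ p)
    (a b n : ℤ) :
    let m : ℤ := b - a
    let τs : ℝ := (-(((a : ℝ) + b) / p) + (n : ℝ) / q) * π
    iteratedDeriv 2 (fun t : ℝ =>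
        (Real.cos (((q : ℝ) + p) * (t + 2 * π * a / p))
          - Real.cos (((q : ℝ) + p) * (t + 2 * π * b / p))) / ((q : ℝ) + p)
        - (Real.cos (((q : ℝ) - p) * (t + 2 * π * a / p))
          - Real.cos (((q : ℝ) - p) * (t + 2 * π * b / p))) / ((q : ℝ) - p)) τs
      = 4 * (q : ℝ) * Real.sin (((q : ℝ) - p) * n * π / q)
          * Real.sin (((q : ℝ) - p) * m * π / p) := by
  intro m τs
  have hp0 : (p : ℝ) ≠ 0 := Nat.cast_ne_zero.mpr hp.ne'
  have hq0 : (q : ℝ) ≠ 0 := Nat.cast_ne_zero.mpr hq.ne'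
  have hk1 : (q : ℝ) + p ≠ 0 := by positivity
  have hk2 : (q : ℝ) - p ≠ 0 := by
    have : (q : ℝ) ≠ (p : ℝ) := by exact_mod_cast hpq
    intro h; exact this (by linarith)
  set k1 : ℝ := (q : ℝ) + p with hk1def
  set k2 : ℝ := (q : ℝ) - p with hk2def
  set A : ℝ := 2 * π * a / p with hA
  set B : ℝ := 2 * π * b / p with hB
  -- first derivative
  have hderiv1 : ∀ t : ℝ, HasDerivAt (fun t : ℝ =>
      (Real.cos (k1 * (t + A)) - Real.cos (k1 * (t + B))) / k1
        - (Real.cos (k2 * (t + A)) - Real.cos (k2 * (t + B))) / k2)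
      (-Real.sin (k1 * (t + A)) + Real.sin (k1 * (t + B))
        + Real.sin (k2 * (t + A)) - Real.sin (k2 * (t + B))) t := by
    intro t
    have h := ((((hd_cos k1 A t).sub (hd_cos k1 B t)).div_const k1).sub
      (((hd_cos k2 A t).sub (hd_cos k2 B t)).div_const k2))
    convert h using 1
    · rfl
    · rfl
    · rfl
    · field_simp
      ring
  have hderiv2 : ∀ t : ℝ, HasDerivAt (fun t : ℝ =>
      -Real.sin (k1 * (t + A)) + Real.sin (k1 * (t + B))
        + Real.sin (k2 * (t + A)) - Real.sin (k2 * (t + B)))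
      (-(Real.cos (k1 * (t + A)) * k1) + Real.cos (k1 * (t + B)) * k1
        + Real.cos (k2 * (t + A)) * k2 - Real.cos (k2 * (t + B)) * k2) t := by
    intro t
    exact (((hd_sin k1 A t).neg.add (hd_sin k1 B t)).add (hd_sin k2 A t)).sub (hd_sin k2 B t)
  have hfun : (fun t : ℝ =>
        (Real.cos (((q : ℝ) + p) * (t + 2 * π * a / p))
          - Real.cos (((q : ℝ) + p) * (t + 2 * π * b / p))) / ((q : ℝ) + p)
        - (Real.cos (((q : ℝ) - p) * (t + 2 * π * a / p))
          - Real.cos (((q : ℝ) - p) * (t + 2 * π * b / p))) / ((q : ℝ) - p))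
      = (fun t : ℝ =>
        (Real.cos (k1 * (t + A)) - Real.cos (k1 * (t + B))) / k1
          - (Real.cos (k2 * (t + A)) - Real.cos (k2 * (t + B))) / k2) := rfl
  rw [hfun, iteratedDeriv_succ, iteratedDeriv_one]
  have hd1 : deriv (fun t : ℝ =>
      (Real.cos (k1 * (t + A)) - Real.cos (k1 * (t + B))) / k1
        - (Real.cos (k2 * (t + A)) - Real.cos (k2 * (t + B))) / k2)
      = fun t : ℝ => -Real.sin (k1 * (t + A)) + Real.sin (k1 * (t + B))
        + Real.sin (k2 * (t + A)) - Real.sin (k2 * (t + B)) :=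
    funext fun t => (hderiv1 t).deriv
  rw [hd1, (hderiv2 τs).deriv]
  -- now pure trigonometry
  have hτA : τs + A = (n : ℝ) * π / q - (m : ℝ) * π / p := by
    simp only [hA, τs]
    push_cast [m]
    field_simp
    ring
  have hτB : τs + B = (n : ℝ) * π / q + (m : ℝ) * π / p := by
    simp only [hB, τs]
    push_cast [m]
    field_simp
    ring
  rw [hτA, hτB]
  set x : ℝ := (n : ℝ) * π / q with hx
  set y : ℝ := (m : ℝ) * π / p with hy
  have key : ∀ k : ℝ, Real.cos (k * (x - y)) - Real.cos (k * (x + y))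
      = 2 * Real.sin (k * x) * Real.sin (k * y) := by
    intro k
    rw [mul_sub, mul_add, Real.cos_sub, Real.cos_add]
    ring
  have expand : -(Real.cos (k1 * (x - y)) * k1) + Real.cos (k1 * (x + y)) * k1
      + Real.cos (k2 * (x - y)) * k2 - Real.cos (k2 * (x + y)) * k2
      = -k1 * (2 * Real.sin (k1 * x) * Real.sin (k1 * y))
        + k2 * (2 * Real.sin (k2 * x) * Real.sin (k2 * y)) := by
    rw [← key k1, ← key k2]; ring
  rw [expand]
  -- relations between sines
  have hsx : Real.sin (k1 * x) = -Real.sin (k2 * x) := by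
    have e1 : k1 * x = (n : ℝ) * π + (p : ℝ) * n * π / q := by
      rw [hx, hk1def]; field_simp
    have e2 : k2 * x = (n : ℝ) * π - (p : ℝ) * n * π / q := by
      rw [hx, hk2def]; field_simp
    rw [e1, e2, Real.sin_add, Real.sin_sub]
    have : Real.sin ((n : ℝ) * π) = 0 := by
      simpa using Real.sin_int_mul_pi n
    rw [this]; ring
  have hsy : Real.sin (k1 * y) = Real.sin (k2 * y) := by
    have e1 : k1 * y = (q : ℝ) * m * π / p + (m : ℝ) * π := by
      rw [hy, hk1def]; field_simp
    have e2 : k2 * y = (q : ℝ) * m * π / p - (m : ℝ) * π := by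
      rw [hy, hk2def]; field_simp
    rw [e1, e2, Real.sin_add, Real.sin_sub]
    have : Real.sin ((m : ℝ) * π) = 0 := by
      simpa using Real.sin_int_mul_pi m
    rw [this]; ring
  rw [hsx, hsy]
  have harg1 : k2 * x = ((q : ℝ) - p) * n * π / q := by rw [hx, hk2def]; ring
  have harg2 : k2 * y = ((q : ℝ) - p) * m * π / p := by rw [hy, hk2def]; ring
  rw [harg1, harg2, hk1def, hk2def]
  ring
end
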